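/- Under the model assumptions (A1)–(A5), (τ_2(n) − τ_1(n))/c_n converges to 0 almost surely as n → ∞, where τ_1(n) = inf{k ≥ 1 : T_{k−1} + η_k ≥ c_n} and τ_2(n) = inf{k ≥ 1 : T_k = c_n}. -/

import Mathlib

open MeasureTheory ProbabilityTheory Filter Finset Asymptotics Topology

noncomputable section

namespace ABTest

variable {Ω : Type*}

/-- The Bernoulli law on `ℕ` with success probability `r`. -/
def bern (r : ℝ) : Measure ℕ :=
  ENNReal.ofReal r • Measure.dirac 1 + ENNReal.ofReal (1 - r) • Measure.dirac 0

/-- The joint law of `(I_k, (ξ_k, η_k))`: given `I_k = i`, the pair `(ξ_k, η_k)` has law `μ_i`. -/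
def mixLaw (p : ℝ) (μ0 μ1 : Measure (ℕ × ℕ)) : Measure (ℕ × ℕ × ℕ) :=
  ENNReal.ofReal p • (Measure.dirac 1).prod μ1 +
    ENNReal.ofReal (1 - p) • (Measure.dirac 0).prod μ0

/-- The 2-dimensional random walk `R_k = (S_k, T_k)` in the semi-infinite strip of height `c`.
Step `k` (from `R_{k-1}` to `R_k`) uses the random variables with index `k`. -/
def walk (ξ η θ J : ℕ → Ω → ℕ) (c : ℕ) : ℕ → Ω → ℕ × ℕ
  | 0, _ => (0, 0)
  | k + 1, ω =>
    let R := walk ξ η θ J c k ω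
    if R.2 = c then (R.1 + θ (k + 1) ω, R.2)
    else if R.2 + η (k + 1) ω ≤ c then (R.1 + ξ (k + 1) ω, R.2 + η (k + 1) ω)
    else if J (k + 1) ω = 1 then (R.1 + ξ (k + 1) ω, c)
    else R

/-- `N_n^{(i)}`, the number of visitors in group `i` among the first `n` visitors. -/
def Ni (I : ℕ → Ω → ℕ) (i n : ℕ) (ω : Ω) : ℕ :=
  ∑ k ∈ Finset.Icc 1 n, if I k ω = i then 1 else 0

/-- `L_n^{(i)}`, the number of purchases (`X_k + Y_k > 0`) in group `i` among the first `n`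
visitors, when the capacity of the popular good is `c`. -/
def Li (I J ξ η θ : ℕ → Ω → ℕ) (c i n : ℕ) (ω : Ω) : ℕ :=
  ∑ k ∈ Finset.Icc 1 n,
    if (walk ξ η θ J c (k - 1) ω).1 + (walk ξ η θ J c (k - 1) ω).2
        < (walk ξ η θ J c k ω).1 + (walk ξ η θ J c k ω).2 ∧ I k ω = i
    then 1 else 0

/-- The chi-squared statistic associated with the contingency table of the first `n` visitors. -/
def chiSq (I J ξ η θ : ℕ → Ω → ℕ) (c n : ℕ) (ω : Ω) : ℝ :=
  let N0 : ℝ := (Ni I 0 n ω : ℝ)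
  let N1 : ℝ := (Ni I 1 n ω : ℝ)
  let L0 : ℝ := (Li I J ξ η θ c 0 n ω : ℝ)
  let L1 : ℝ := (Li I J ξ η θ c 1 n ω : ℝ)
  let L : ℝ := L0 + L1
  ((L0 - L * N0 / (n : ℝ)) ^ 2 / (L * N0 / (n : ℝ)) +
      (L1 - L * N1 / (n : ℝ)) ^ 2 / (L * N1 / (n : ℝ))) +
    ((N0 - L0 - ((n : ℝ) - L) * N0 / (n : ℝ)) ^ 2 / (((n : ℝ) - L) * N0 / (n : ℝ)) +
      (N1 - L1 - ((n : ℝ) - L) * N1 / (n : ℝ)) ^ 2 / (((n : ℝ) - L) * N1 / (n : ℝ)))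

/-- `p_i = μ_i({(0,0)}ᶜ)`, the theoretical conversion rate of law `μ`. -/
def pSale (μ : Measure (ℕ × ℕ)) : ℝ := 1 - (μ {(0, 0)}).toReal

/-- `m^ξ`, the mean of the first coordinate under `μ`. -/
def mXi (μ : Measure (ℕ × ℕ)) : ℝ := ∫ x, (x.1 : ℝ) ∂μ

/-- `m^η`, the mean of the second coordinate under `μ`. -/
def mEta (μ : Measure (ℕ × ℕ)) : ℝ := ∫ x, (x.2 : ℝ) ∂μ

/-- `p_θ = ν({m : 0 < m})`, the conversion rate after sell-out. -/
def pTheta (ν : Measure ℕ) : ℝ := (ν {m | 0 < m}).toReal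

/-- `m^η = p m_1^η + (1-p) m_0^η`. -/
def mEtaBar (p : ℝ) (μ0 μ1 : Measure (ℕ × ℕ)) : ℝ := p * mEta μ1 + (1 - p) * mEta μ0

/-- Model assumptions (A1)–(A5): the sequence `((I_k, ξ_k, η_k), J_k, θ_k)_{k ≥ 0}` is i.i.d.;
within one index, `(I_k, (ξ_k, η_k))`, `J_k` and `θ_k` are independent with respective laws
`mixLaw p μ0 μ1` (i.e. `I_k` is Bernoulli(`p`) and conditionally on `I_k = i` the vector
`(ξ_k, η_k)` has law `μ_i`), Bernoulli(`q`) and `ν`; the laws `μ_0, μ_1` charge every point of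
`{0,1}²`, and all variables have finite second moments. -/
structure IsModel {Ω : Type*} [MeasurableSpace Ω] (P : Measure Ω) (p q : ℝ)
    (I J ξ η θ : ℕ → Ω → ℕ) (μ0 μ1 : Measure (ℕ × ℕ)) (ν : Measure ℕ) : Prop where
  isProb : IsProbabilityMeasure P
  probμ0 : IsProbabilityMeasure μ0
  probμ1 : IsProbabilityMeasure μ1
  probν : IsProbabilityMeasure ν
  hp : 0 < p ∧ p < 1
  hq : 0 < q ∧ q ≤ 1
  meas : ∀ k, Measurable fun ω => ((I k ω, ξ k ω, η k ω), J k ω, θ k ω)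
  iid : iIndepFun
    (fun k ω => ((I k ω, ξ k ω, η k ω), J k ω, θ k ω)) P
  law : ∀ k, Measure.map (fun ω => ((I k ω, ξ k ω, η k ω), J k ω, θ k ω)) P
      = (mixLaw p μ0 μ1).prod ((bern q).prod ν)
  pos0 : ∀ a b : ℕ, a ≤ 1 → b ≤ 1 → 0 < μ0 {(a, b)}
  pos1 : ∀ a b : ℕ, a ≤ 1 → b ≤ 1 → 0 < μ1 {(a, b)}
  mom0 : Integrable (fun x : ℕ × ℕ => (x.1 : ℝ) ^ 2 + (x.2 : ℝ) ^ 2) μ0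
  mom1 : Integrable (fun x : ℕ × ℕ => (x.1 : ℝ) ^ 2 + (x.2 : ℝ) ^ 2) μ1
  momν : Integrable (fun m : ℕ => (m : ℝ) ^ 2) ν

/-- `τ₁(c)`, the first attempt to reach the half-plane `ℕ₀ × [c, ∞)`:
the first `k ≥ 1` with `T_{k-1} + η_k = η_1 + … + η_k ≥ c`. -/
def tau1 (η : ℕ → Ω → ℕ) (c : ℕ) (ω : Ω) : ℕ :=
  sInf {k | 1 ≤ k ∧ c ≤ ∑ j ∈ Finset.Icc 1 k, η j ω}

/-- `τ₂(c)`, the first entrance of the walk to the horizontal line `ℕ₀ × {c}`. -/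
def tau2 (ξ η θ J : ℕ → Ω → ℕ) (c : ℕ) (ω : Ω) : ℕ :=
  sInf {k | 1 ≤ k ∧ (walk ξ η θ J c k ω).2 = c}



lemma sum_range_shift {M : Type*} [AddCommMonoid M] (f : ℕ → M) :
    ∀ n, ∑ i ∈ Finset.range n, f (i+1) = ∑ k ∈ Finset.Icc 1 n, f k
  | 0 => by simp
  | (n+1) => by
    rw [Finset.sum_range_succ, Finset.sum_Icc_succ_top (Nat.one_le_iff_ne_zero.2 (Nat.succ_ne_zero n)),
      sum_range_shift f n]

lemma cesaro_diff (a : ℕ → ℝ) (L : ℝ)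
    (h : Tendsto (fun n => (∑ k ∈ Finset.Icc 1 n, a k) / n) atTop (𝓝 L)) :
    Tendsto (fun n => a n / n) atTop (𝓝 0) := by
  set A : ℕ → ℝ := fun n => ∑ k ∈ Finset.Icc 1 n, a k with hA
  have h2 : Tendsto (fun n : ℕ => A (n-1) / ((n:ℝ)-1)) atTop (𝓝 L) := by
    have := h.comp (tendsto_sub_atTop_nat 1)
    apply this.congr'
    filter_upwards [eventually_ge_atTop 1] with n hn
    simp only [Function.comp_apply]
    rw [Nat.cast_sub hn]
    norm_num
    rfl
  have h3 : Tendsto (fun n : ℕ => ((n:ℝ)-1) / n) atTop (𝓝 1) := by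
    have h4 : Tendsto (fun n : ℕ => 1 - 1/(n:ℝ)) atTop (𝓝 (1 - 0)) :=
      tendsto_const_nhds.sub tendsto_one_div_atTop_nhds_zero_nat
    rw [sub_zero] at h4
    apply h4.congr'
    filter_upwards [eventually_ge_atTop 1] with n hn
    have : (n:ℝ) ≠ 0 := Nat.cast_ne_zero.2 (by omega)
    field_simp
  have key : Tendsto (fun n : ℕ => A n / n - (A (n-1) / ((n:ℝ)-1)) * (((n:ℝ)-1)/n))
      atTop (𝓝 (L - L * 1)) := h.sub (h2.mul h3)
  rw [mul_one, sub_self] at key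
  apply key.congr'
  filter_upwards [eventually_ge_atTop 1] with n hn
  have hn0 : (n:ℝ) ≠ 0 := Nat.cast_ne_zero.2 (by omega)
  obtain ⟨m, rfl⟩ : ∃ m, n = m + 1 := ⟨n - 1, by omega⟩
  have hAn : A (m+1) = A m + a (m+1) := by
    rw [hA]
    simp only
    rw [Finset.sum_Icc_succ_top (Nat.one_le_iff_ne_zero.2 (Nat.succ_ne_zero _))]
  simp only [Nat.add_sub_cancel]
  by_cases h1 : m = 0
  · subst h1
    simp only [hA]
    norm_num
  · have hn1 : ((m+1:ℕ):ℝ)-1 ≠ 0 := by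
      have : (1:ℝ) < ((m+1:ℕ):ℝ) := by exact_mod_cast (by omega : 1 < m + 1)
      linarith
    have hm : (((m+1:ℕ):ℝ)-1) = (m:ℝ) := by push_cast; ring
    rw [hAn]
    rw [hm] at *
    have hm0 : (m:ℝ) ≠ 0 := Nat.cast_ne_zero.2 h1
    field_simp
    try ring

section walklemmas
variable (ξ η θ J : ℕ → Ω → ℕ) (c : ℕ) (ω : Ω)

lemma walk_snd_le : ∀ k, (walk ξ η θ J c k ω).2 ≤ c
  | 0 => Nat.zero_le c
  | (k+1) => by
    have ih := walk_snd_le k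
    simp only [walk]
    split_ifs with h1 h2 h3
    · exact h1.le
    · exact h2
    · exact le_rfl
    · exact ih

lemma walk_snd_mono (k : ℕ) : (walk ξ η θ J c k ω).2 ≤ (walk ξ η θ J c (k+1) ω).2 := by
  have hle := walk_snd_le ξ η θ J c ω k
  simp only [walk]
  split_ifs with h1 h2 h3
  · exact le_rfl
  · exact Nat.le_add_right _ _
  · exact hle
  · exact le_rfl

lemma walk_snd_stay (k : ℕ) (h : (walk ξ η θ J c k ω).2 = c) :
    (walk ξ η θ J c (k+1) ω).2 = c := by
  simp only [walk]
  rw [if_pos h]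
  exact h

lemma walk_snd_eq_sum : ∀ k, (∑ j ∈ Finset.Icc 1 k, η j ω) < c →
      (walk ξ η θ J c k ω).2 = ∑ j ∈ Finset.Icc 1 k, η j ω
  | 0, h => by simp [walk]
  | (k+1), h => by
    rw [Finset.sum_Icc_succ_top (Nat.one_le_iff_ne_zero.2 (Nat.succ_ne_zero k))] at h ⊢
    have hk : (∑ j ∈ Finset.Icc 1 k, η j ω) < c :=
      lt_of_le_of_lt (Nat.le_add_right _ _) h
    have ih := walk_snd_eq_sum k hk
    simp only [walk]
    rw [if_neg (by rw [ih]; exact Nat.ne_of_lt hk), if_pos (by rw [ih]; exact h.le)]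
    simp [ih]

lemma walk_progress (t0 : ℕ) :
    ∀ m, (walk ξ η θ J c (t0+m) ω).2 = c ∨
      (walk ξ η θ J c t0 ω).2 +
        (∑ j ∈ Finset.Ioc t0 (t0+m), if 1 ≤ η j ω ∧ J j ω = 1 then 1 else 0)
          ≤ (walk ξ η θ J c (t0+m) ω).2
  | 0 => by simp
  | (m+1) => by
    rcases walk_progress t0 m with h | h
    · exact Or.inl (by rw [← Nat.add_assoc]; exact walk_snd_stay ξ η θ J c ω _ h)
    · by_cases hc : (walk ξ η θ J c (t0+m) ω).2 = c
      · exact Or.inl (by rw [← Nat.add_assoc]; exact walk_snd_stay ξ η θ J c ω _ hc)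
      · right
        rw [← Nat.add_assoc] at *
        rw [Finset.sum_Ioc_succ_top (Nat.le_add_right _ _)]
        by_cases hind : 1 ≤ η (t0+m+1) ω ∧ J (t0+m+1) ω = 1
        · rw [if_pos hind]
          simp only [walk]
          rw [if_neg hc]
          by_cases hfit : (walk ξ η θ J c (t0+m) ω).2 + η (t0+m+1) ω ≤ c
          · rw [if_pos hfit]
            simp only
            omega
          · rw [if_neg hfit, if_pos hind.2]
            simp only
            have := walk_snd_le ξ η θ J c ω (t0+m)
            omega
        · rw [if_neg hind]
          have := walk_snd_mono ξ η θ J c ω (t0+m)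
          omega
end walklemmas

set_option maxHeartbeats 2000000 in
lemma det_main (ξ η θ J : ℕ → Ω → ℕ) (ω : Ω) (β : ℝ) (hβpos : 0 < β)
    (hβ : Tendsto (fun n : ℕ => (∑ k ∈ Finset.Icc 1 n,
        if 1 ≤ η k ω ∧ J k ω = 1 then (1:ℝ) else 0) / n) atTop (𝓝 β))
    (hη : Tendsto (fun n : ℕ => (η n ω : ℝ) / n) atTop (𝓝 0))
    (c : ℕ → ℕ) (hcpos : ∀ n, 0 < c n) (hunbdd : Tendsto c atTop atTop) :
    Tendsto (fun n : ℕ => ((tau2 ξ η θ J (c n) ω : ℝ) - (tau1 η (c n) ω : ℝ)) / (c n : ℝ))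
      atTop (𝓝 0) := by
  classical
  set s : ℕ → ℕ := fun n => ∑ k ∈ Finset.Icc 1 n, if 1 ≤ η k ω ∧ J k ω = 1 then 1 else 0
    with hs
  have hscast : ∀ n, ((s n : ℕ) : ℝ)
      = ∑ k ∈ Finset.Icc 1 n, if 1 ≤ η k ω ∧ J k ω = 1 then (1:ℝ) else 0 := by
    intro n
    rw [hs]
    push_cast
    exact Finset.sum_congr rfl fun k _ => by split_ifs <;> norm_num
  have hβ' : Tendsto (fun n : ℕ => (s n : ℝ) / n) atTop (𝓝 β) := by
    apply hβ.congr
    intro n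
    rw [hscast]
  have hsle : ∀ n, s n ≤ n := by
    intro n
    rw [hs]
    calc (∑ k ∈ Finset.Icc 1 n, if 1 ≤ η k ω ∧ J k ω = 1 then 1 else 0)
        ≤ ∑ _k ∈ Finset.Icc 1 n, 1 := Finset.sum_le_sum fun k _ => by split_ifs <;> omega
      _ = n := by simp
  have hβle1 : β ≤ 1 := by
    apply le_of_tendsto hβ'
    filter_upwards [eventually_ge_atTop 1] with n hn
    have hn0 : (0:ℝ) < n := by exact_mod_cast hn
    rw [div_le_one hn0]
    exact_mod_cast hsle n
  rw [Metric.tendsto_atTop]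
  intro ε' hε'
  set ε := min (ε'/2) 1 with hεdef
  have hεpos : 0 < ε := lt_min (by linarith) one_pos
  have hεle1 : ε ≤ 1 := min_le_right _ _
  have hεlt : ε < ε' := lt_of_le_of_lt (min_le_left _ _) (by linarith)
  set K := ⌈(4:ℝ)/β⌉₊ with hKdef
  have hK4 : 4 ≤ β * K := by
    have := Nat.le_ceil ((4:ℝ)/β)
    rw [div_le_iff₀ hβpos] at this
    linarith [this]
  have hKpos : (0:ℝ) < K := by nlinarith
  have hK1 : 1 ≤ (K:ℝ) := by
    have : (1:ℕ) ≤ K := by exact_mod_cast Nat.one_le_iff_ne_zero.2 (by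
      intro h0; rw [h0] at hKpos; norm_num at hKpos)
    exact_mod_cast this
  set δ := β*ε/(2*(3*K+ε+1)) with hδdef
  have hden : (0:ℝ) < 2*(3*K+ε+1) := by positivity
  have hδpos : 0 < δ := by positivity
  have hδeq : δ * (2*(3*(K:ℝ)+ε+1)) = β*ε := div_mul_cancel₀ _ (ne_of_gt hden)
  have hδK : δ * K ≤ 1 := by nlinarith [hδpos.le, hεpos.le]
  rw [Metric.tendsto_atTop] at hβ' hη
  obtain ⟨N1, hN1⟩ := hβ' δ hδpos
  obtain ⟨N2, hN2⟩ := hη δ hδpos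
  set N1' := max N1 1 with hN1'def
  set N2' := max N2 1 with hN2'def
  have hlow : ∀ n : ℕ, β*n - δ*n - β*N1' ≤ (s n : ℝ) := by
    intro n
    rcases le_or_gt N1' n with h | h
    · have hd := hN1 n (le_trans (le_max_left _ _) h)
      rw [Real.dist_eq] at hd
      have h1 : 1 ≤ n := le_trans (le_max_right _ _) h
      have hn0 : (0:ℝ) < n := by exact_mod_cast h1
      have h2 : β - δ < (s n : ℝ)/n := by
        have := (abs_lt.1 hd).1
        linarith
      have h3 : (β - δ) * n ≤ (s n : ℝ) := by
        rw [← le_div_iff₀ hn0]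
        exact h2.le
      have hN1nn : (0:ℝ) ≤ N1' := Nat.cast_nonneg _
      nlinarith [hβpos.le]
    · have h1 : (n:ℝ) ≤ N1' := by exact_mod_cast h.le
      have h2 : (0:ℝ) ≤ s n := Nat.cast_nonneg _
      nlinarith [hδpos.le, hβpos.le, Nat.cast_nonneg (α := ℝ) n]
  have hhigh : ∀ n : ℕ, (s n : ℝ) ≤ β*n + δ*n + N1' := by
    intro n
    rcases le_or_gt N1' n with h | h
    · have hd := hN1 n (le_trans (le_max_left _ _) h)
      rw [Real.dist_eq] at hd
      have h1 : 1 ≤ n := le_trans (le_max_right _ _) h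
      have hn0 : (0:ℝ) < n := by exact_mod_cast h1
      have h2 : (s n : ℝ)/n < β + δ := by
        have := (abs_lt.1 hd).2
        linarith
      have h3 : (s n : ℝ) ≤ (β + δ) * n := by
        rw [div_lt_iff₀ hn0] at h2
        linarith
      have hN1nn : (0:ℝ) ≤ N1' := Nat.cast_nonneg _
      linarith
    · have h1 : (n:ℝ) ≤ N1' := by exact_mod_cast h.le
      have h2 : (s n : ℝ) ≤ n := by exact_mod_cast hsle n
      nlinarith [hδpos.le, hβpos.le, Nat.cast_nonneg (α := ℝ) n]
  set C3 : ℕ := ∑ k ∈ Finset.Icc 1 N2', η k ω with hC3def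
  have hgap : ∀ n : ℕ, 1 ≤ n → (η n ω : ℝ) ≤ δ*n + C3 := by
    intro n hn1
    rcases le_or_gt N2' n with h | h
    · have hd := hN2 n (le_trans (le_max_left _ _) h)
      rw [Real.dist_eq, sub_zero] at hd
      have hn0 : (0:ℝ) < n := by exact_mod_cast hn1
      have h2 : (η n ω : ℝ)/n < δ := lt_of_abs_lt hd
      rw [div_lt_iff₀ hn0] at h2
      have : (0:ℝ) ≤ C3 := Nat.cast_nonneg _
      nlinarith
    · have hmem : n ∈ Finset.Icc 1 N2' := Finset.mem_Icc.2 ⟨hn1, h.le⟩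
      have : η n ω ≤ C3 :=
        Finset.single_le_sum (f := fun k => η k ω) (fun k _ => Nat.zero_le _) hmem
      have h2 : (η n ω : ℝ) ≤ C3 := by exact_mod_cast this
      nlinarith [hδpos.le, Nat.cast_nonneg (α := ℝ) n]
  set D := β*(N1':ℝ) + N1' + C3 with hDdef
  have hDnn : 0 ≤ D := by
    have := Nat.cast_nonneg (α := ℝ) N1'
    have := Nat.cast_nonneg (α := ℝ) C3
    nlinarith [hβpos.le]
  set cstar : ℕ := max ⌈β*(N1':ℝ)/2⌉₊ ⌈2*D/(β*ε)⌉₊ + 1 with hcstar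
  obtain ⟨N, hN⟩ := (tendsto_atTop_atTop.1 hunbdd) cstar
  refine ⟨N, fun n hn => ?_⟩
  have hccs : cstar ≤ c n := hN n hn
  set cc := c n with hccdef
  have hcc1 : 1 ≤ cc := hcpos n
  have hccR : (1:ℝ) ≤ cc := by exact_mod_cast hcc1
  have hccpos : (0:ℝ) < cc := by linarith
  have hcb1 : β*(N1':ℝ) ≤ 2*cc := by
    have h1 : (⌈β*(N1':ℝ)/2⌉₊ : ℝ) ≤ cc := by
      have : ⌈β*(N1':ℝ)/2⌉₊ ≤ cc := le_trans (le_trans (le_max_left _ _) (Nat.le_succ _)) hccs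
      exact_mod_cast this
    have h2 := Nat.le_ceil (β*(N1':ℝ)/2)
    linarith
  have hcb2 : 2*D ≤ β*ε*cc := by
    have h1 : (⌈2*D/(β*ε)⌉₊ : ℝ) ≤ cc := by
      have : ⌈2*D/(β*ε)⌉₊ ≤ cc := le_trans (le_trans (le_max_right _ _) (Nat.le_succ _)) hccs
      exact_mod_cast this
    have h2 := Nat.le_ceil (2*D/(β*ε))
    have hbe : (0:ℝ) < β*ε := by positivity
    rw [div_le_iff₀ hbe] at h2
    nlinarith
  -- τ₁ ≤ K * cc
  have hsK : cc ≤ s (K * cc) := by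
    have h1 := hlow (K * cc)
    push_cast at h1
    have h2 : (4:ℝ)*cc ≤ β*(K*cc) := by nlinarith
    have h3 : δ*((K:ℝ)*cc) ≤ cc := by nlinarith [hδpos.le]
    have : (cc:ℝ) ≤ s (K*cc) := by nlinarith
    exact_mod_cast this
  set S : ℕ → ℕ := fun n => ∑ k ∈ Finset.Icc 1 n, η k ω with hSdef
  have hss : ∀ n, s n ≤ S n := by
    intro n
    apply Finset.sum_le_sum
    intro k _
    split_ifs with h
    · exact h.1
    · exact Nat.zero_le _
  have hKcc1 : 1 ≤ K * cc := by
    have : (1:ℕ) ≤ K := by exact_mod_cast (by exact_mod_cast hK1 : (1:ℕ) ≤ K)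
    exact Nat.mul_pos this hcc1
  have hmemK : K * cc ∈ {k | 1 ≤ k ∧ cc ≤ ∑ j ∈ Finset.Icc 1 k, η j ω} :=
    ⟨hKcc1, le_trans hsK (hss _)⟩
  set t1 := tau1 η cc ω with ht1def
  have ht1mem : 1 ≤ t1 ∧ cc ≤ S t1 := Nat.sInf_mem ⟨K * cc, hmemK⟩
  have ht1le : t1 ≤ K * cc := Nat.sInf_le hmemK
  set t0 := t1 - 1 with ht0def
  have ht01 : t0 + 1 = t1 := by omega
  have hSt0 : S t0 < cc := by
    rcases Nat.eq_zero_or_pos t0 with h0 | h0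
    · rw [h0]
      simpa [hSdef] using hcpos n
    · have hnot : t0 ∉ {k | 1 ≤ k ∧ cc ≤ ∑ j ∈ Finset.Icc 1 k, η j ω} :=
        Nat.notMem_of_lt_sInf (by omega : t0 < t1)
      simp only [Set.mem_setOf_eq, not_and, not_le] at hnot
      exact hnot h0
  have hT0 : (walk ξ η θ J cc t0 ω).2 = S t0 := walk_snd_eq_sum ξ η θ J cc ω t0 hSt0
  have hgapcc : cc ≤ S t0 + η t1 ω := by
    have hsplit : S t1 = S t0 + η t1 ω := by
      rw [← ht01, hSdef]
      exact Finset.sum_Icc_succ_top (Nat.one_le_iff_ne_zero.2 (Nat.succ_ne_zero t0)) _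
    rw [← hsplit]
    exact ht1mem.2
  set m := ⌈ε * (cc:ℝ)⌉₊ with hmdef
  have hm3 : ε*(cc:ℝ) ≤ m := Nat.le_ceil _
  have hm1 : 1 ≤ m := Nat.ceil_pos.2 (by positivity)
  have hm2 : (m:ℝ) ≤ ε*cc + 1 := (Nat.ceil_lt_add_one (by positivity)).le
  set sdiff := ∑ j ∈ Finset.Ioc t0 (t0+m), (if 1 ≤ η j ω ∧ J j ω = 1 then 1 else 0) with hsd
  have hsplit : s t0 + sdiff = s (t0+m) := by
    have h1 : ∀ N, s N = ∑ j ∈ Finset.Ioc 0 N, (if 1 ≤ η j ω ∧ J j ω = 1 then 1 else 0) := by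
      intro N
      rw [hs, ← Finset.Icc_add_one_left_eq_Ioc]
      rfl
    rw [h1, h1, hsd]
    exact Finset.sum_Ioc_consecutive _ (Nat.zero_le t0) (Nat.le_add_right _ _)
  have hkey : η t1 ω ≤ sdiff := by
    have e1 : (sdiff:ℝ) = (s (t0+m) : ℝ) - s t0 := by
      have := congrArg (fun x : ℕ => (x:ℝ)) hsplit
      push_cast at this
      linarith
    have l1 := hlow (t0+m)
    push_cast at l1
    have l2 := hhigh t0
    have l3 := hgap t1 ht1mem.1
    have ht1R : (t1:ℝ) = (t0:ℝ) + 1 := by exact_mod_cast congrArg (fun x : ℕ => (x:ℝ)) ht01.symm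
    have ht0le : (t0:ℝ) ≤ (K:ℝ)*cc - 1 := by
      have : t0 + 1 ≤ K * cc := by omega
      have h' : ((t0+1:ℕ):ℝ) ≤ ((K*cc:ℕ):ℝ) := by exact_mod_cast this
      push_cast at h'
      linarith
    -- main arithmetic
    have hδ2 : δ*((3*(K:ℝ)+ε+1)) = β*ε/2 := by linarith
    have hinner : 3*(t0:ℝ) + m + 1 ≤ (3*(K:ℝ)+ε+1)*cc := by nlinarith
    have hA : δ*(3*(t0:ℝ) + m + 1) ≤ δ*((3*(K:ℝ)+ε+1)*cc) :=
      mul_le_mul_of_nonneg_left hinner hδpos.le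
    have hB : δ*((3*(K:ℝ)+ε+1)*cc) = (β*ε/2)*cc := by
      rw [← mul_assoc, hδ2]
    have hC : β*ε*(cc:ℝ) ≤ β*(m:ℝ) := by nlinarith [hβpos.le]
    have goalR : (η t1 ω : ℝ) ≤ (sdiff:ℝ) := by
      rw [e1]
      nlinarith [l1, l2, l3, hA, hB, hC, hcb2, hm3]
    exact_mod_cast goalR
  have hT : (walk ξ η θ J cc (t0+m) ω).2 = cc := by
    rcases walk_progress ξ η θ J cc ω t0 m with h | h
    · exact h
    · have hle := walk_snd_le ξ η θ J cc ω (t0+m)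
      rw [hT0] at h
      rw [← hsd] at h
      omega
  have ht2le : tau2 ξ η θ J cc ω ≤ t0 + m := Nat.sInf_le ⟨by omega, hT⟩
  set t2 := tau2 ξ η θ J cc ω with ht2def
  have hne2 : {k | 1 ≤ k ∧ (walk ξ η θ J cc k ω).2 = cc}.Nonempty := ⟨t0 + m, by omega, hT⟩
  have ht2mem : 1 ≤ t2 ∧ (walk ξ η θ J cc t2 ω).2 = cc := Nat.sInf_mem hne2
  have ht12 : t1 ≤ t2 := by
    by_contra hlt
    push_neg at hlt
    have hnot : t2 ∉ {k | 1 ≤ k ∧ cc ≤ ∑ j ∈ Finset.Icc 1 k, η j ω} :=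
      Nat.notMem_of_lt_sInf hlt
    simp only [Set.mem_setOf_eq, not_and, not_le] at hnot
    have hS2 : S t2 < cc := hnot ht2mem.1
    have := walk_snd_eq_sum ξ η θ J cc ω t2 hS2
    rw [ht2mem.2] at this
    omega
  -- conclude
  rw [Real.dist_eq, sub_zero]
  have hnum : (0:ℝ) ≤ (t2:ℝ) - t1 := by
    have : (t1:ℝ) ≤ t2 := by exact_mod_cast ht12
    linarith
  rw [abs_of_nonneg (div_nonneg hnum hccpos.le)]
  have hub : (t2:ℝ) - t1 ≤ ε * cc := by
    have h1 : (t2:ℝ) ≤ t0 + m := by exact_mod_cast ht2le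
    have ht1R : (t1:ℝ) = (t0:ℝ) + 1 := by exact_mod_cast congrArg (fun x : ℕ => (x:ℝ)) ht01.symm
    linarith
  have hfin : ((t2:ℝ) - t1)/cc ≤ ε := by
    rw [div_le_iff₀ hccpos]
    linarith [hub]
  linarith

lemma slln_aux {Ω : Type*} [MeasurableSpace Ω] (P : Measure Ω)
    (Z : ℕ → Ω → (ℕ × ℕ × ℕ) × ℕ × ℕ) (hmeas : ∀ k, Measurable (Z k))
    (hiid : iIndepFun Z P)
    (Λ : Measure ((ℕ × ℕ × ℕ) × ℕ × ℕ))
    (hlaw : ∀ k, Measure.map (Z k) P = Λ)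
    (f : ((ℕ × ℕ × ℕ) × ℕ × ℕ) → ℝ) (hint : Integrable f Λ) :
    ∀ᵐ ω ∂P, Tendsto (fun n : ℕ => (∑ k ∈ Finset.Icc 1 n, f (Z k ω)) / n) atTop
      (𝓝 (∫ x, f x ∂Λ)) := by
  have hf : Measurable f := measurable_of_countable f
  set X : ℕ → Ω → ℝ := fun i ω => f (Z (i+1) ω) with hX
  have hint0 : Integrable (X 0) P := by
    have h : Integrable f (Measure.map (Z 1) P) := by rw [hlaw 1]; exact hint
    exact (integrable_map_measure hf.aestronglyMeasurable (hmeas 1).aemeasurable).1 h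
  have hident : ∀ i, IdentDistrib (X i) (X 0) P P := by
    intro i
    have h : IdentDistrib (Z (i+1)) (Z 1) P P :=
      ⟨(hmeas _).aemeasurable, (hmeas _).aemeasurable, by rw [hlaw, hlaw]⟩
    exact h.comp hf
  have hindep : Pairwise (Function.onFun (IndepFun · · P) X) := by
    intro i j hij
    exact (hiid.indepFun (by omega : i+1 ≠ j+1)).comp hf hf
  have h := strong_law_ae_real X hint0 hindep hident
  have hEX : (∫ ω, X 0 ω ∂P) = ∫ x, f x ∂Λ := by
    rw [hX]
    simp only
    rw [← hlaw 1, integral_map (hmeas 1).aemeasurable hf.aestronglyMeasurable]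
  filter_upwards [h] with ω hω
  rw [hEX] at hω
  apply hω.congr
  intro n
  rw [sum_range_shift (fun k => f (Z k ω)) n]

lemma bern_prob {q : ℝ} (h0 : 0 ≤ q) (h1 : q ≤ 1) : IsProbabilityMeasure (bern q) := by
  constructor
  rw [bern]
  simp only [Measure.add_apply, Measure.smul_apply, smul_eq_mul, measure_univ, mul_one]
  rw [← ENNReal.ofReal_add h0 (by linarith)]
  norm_num

lemma bern_one {q : ℝ} : bern q {1} = ENNReal.ofReal q := by
  rw [bern]
  simp only [Measure.add_apply, Measure.smul_apply, smul_eq_mul, Measure.dirac_apply]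
  simp

lemma mixLaw_prob {p : ℝ} (h0 : 0 ≤ p) (h1 : p ≤ 1) {μ0 μ1 : Measure (ℕ × ℕ)}
    [IsProbabilityMeasure μ0] [IsProbabilityMeasure μ1] :
    IsProbabilityMeasure (mixLaw p μ0 μ1) := by
  constructor
  rw [mixLaw]
  simp only [Measure.add_apply, Measure.smul_apply, smul_eq_mul, measure_univ, mul_one]
  rw [← ENNReal.ofReal_add h0 (by linarith)]
  norm_num

lemma mixLaw_snd_pos {p : ℝ} (h0 : 0 < p) {μ0 μ1 : Measure (ℕ × ℕ)} [SFinite μ1]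
    (hμ1 : 0 < μ1 {(1, 1)}) :
    0 < mixLaw p μ0 μ1 {y : ℕ × ℕ × ℕ | 1 ≤ y.2.2} := by
  rw [mixLaw]
  simp only [Measure.add_apply, Measure.smul_apply, smul_eq_mul]
  have hset : {y : ℕ × ℕ × ℕ | 1 ≤ y.2.2}
      = (Set.univ : Set ℕ) ×ˢ {ab : ℕ × ℕ | 1 ≤ ab.2} := by
    ext y
    simp [Set.mem_prod]
  have h1 : (Measure.dirac (1:ℕ)).prod μ1 {y : ℕ × ℕ × ℕ | 1 ≤ y.2.2}
      = μ1 {ab : ℕ × ℕ | 1 ≤ ab.2} := by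
    rw [hset, Measure.prod_prod]
    simp
  have h2 : 0 < μ1 {ab : ℕ × ℕ | 1 ≤ ab.2} :=
    lt_of_lt_of_le hμ1 (measure_mono (by
      intro x hx
      simp only [Set.mem_singleton_iff] at hx
      subst hx
      simp))
  have hpos : 0 < ENNReal.ofReal p * ((Measure.dirac (1:ℕ)).prod μ1) {y : ℕ × ℕ × ℕ | 1 ≤ y.2.2} := by
    rw [h1]
    exact ENNReal.mul_pos (by simp [ENNReal.ofReal_pos, h0]) (ne_of_gt h2)
  exact lt_of_lt_of_le hpos le_self_add

lemma integrable_snd_coord {μ : Measure (ℕ × ℕ)} [IsProbabilityMeasure μ]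
    (hmom : Integrable (fun x : ℕ × ℕ => (x.1 : ℝ) ^ 2 + (x.2 : ℝ) ^ 2) μ) :
    Integrable (fun ab : ℕ × ℕ => ((ab.2 : ℕ) : ℝ)) μ := by
  apply Integrable.mono' (hmom.add (integrable_const 1))
    (measurable_of_countable _).aestronglyMeasurable
  filter_upwards with ab
  rw [Real.norm_eq_abs, abs_of_nonneg (Nat.cast_nonneg _)]
  simp only [Pi.add_apply]
  have h1 : (0:ℝ) ≤ (ab.1 : ℝ) := Nat.cast_nonneg _
  nlinarith [sq_nonneg ((ab.2:ℝ) - 1), sq_nonneg (ab.1:ℝ)]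

lemma integrable_eta_mixLaw {p : ℝ} (hp0 : 0 < p) (hp1 : p < 1) {μ0 μ1 : Measure (ℕ × ℕ)}
    [IsProbabilityMeasure μ0] [IsProbabilityMeasure μ1]
    (hmom0 : Integrable (fun x : ℕ × ℕ => (x.1 : ℝ) ^ 2 + (x.2 : ℝ) ^ 2) μ0)
    (hmom1 : Integrable (fun x : ℕ × ℕ => (x.1 : ℝ) ^ 2 + (x.2 : ℝ) ^ 2) μ1) :
    Integrable (fun y : ℕ × ℕ × ℕ => ((y.2.2 : ℕ) : ℝ)) (mixLaw p μ0 μ1) := by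
  have key : ∀ (a : ℕ) (μ : Measure (ℕ × ℕ)), IsProbabilityMeasure μ →
      Integrable (fun ab : ℕ × ℕ => ((ab.2 : ℕ) : ℝ)) μ →
      Integrable (fun y : ℕ × ℕ × ℕ => ((y.2.2 : ℕ) : ℝ)) ((Measure.dirac a).prod μ) := by
    intro a μ hμ hint
    have hmap : Measure.map Prod.snd ((Measure.dirac a).prod μ) = μ := by
      rw [Measure.map_snd_prod]
      simp
    have h2 : Integrable (fun ab : ℕ × ℕ => ((ab.2 : ℕ) : ℝ))
        (Measure.map Prod.snd ((Measure.dirac a).prod μ)) := by rw [hmap]; exact hint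
    exact (integrable_map_measure (measurable_of_countable _).aestronglyMeasurable
      measurable_snd.aemeasurable).1 h2
  rw [mixLaw]
  rw [integrable_add_measure]
  constructor
  · rw [integrable_smul_measure (by simp [ENNReal.ofReal_pos, hp0, ne_of_gt])
      ENNReal.ofReal_ne_top]
    exact key 1 μ1 inferInstance (integrable_snd_coord hmom1)
  · rw [integrable_smul_measure (by simp [ENNReal.ofReal_pos, ne_of_gt, show (0:ℝ) < 1 - p by linarith])
      ENNReal.ofReal_ne_top]
    exact key 0 μ0 inferInstance (integrable_snd_coord hmom0)

/-- **Lemma 2 (almost sure closeness of `τ₁` and `τ₂` on the `c_n`-scale).**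
Under the model assumptions (A1)–(A5) (with `q > 0`), if `(c_n)` is nondecreasing and
unbounded, then `(τ₂(n) - τ₁(n))/c_n → 0` almost surely. -/
theorem tau_difference_tendsto_zero_almost_surely
    {Ω : Type*} [MeasurableSpace Ω] (P : Measure Ω) (p q : ℝ)
    (I J ξ η θ : ℕ → Ω → ℕ) (μ0 μ1 : Measure (ℕ × ℕ)) (ν : Measure ℕ)
    (hM : IsModel P p q I J ξ η θ μ0 μ1 ν)
    (c : ℕ → ℕ) (hcpos : ∀ n, 0 < c n) (hmono : Monotone c)
    (hunbdd : Tendsto c atTop atTop) :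
    ∀ᵐ ω ∂P,
      Tendsto (fun n : ℕ =>
          ((tau2 ξ η θ J (c n) ω : ℝ) - (tau1 η (c n) ω : ℝ)) / (c n : ℝ))
        atTop (𝓝 0) := by
  classical
  haveI := hM.isProb
  haveI := hM.probμ0
  haveI := hM.probμ1
  haveI := hM.probν
  obtain ⟨hp0, hp1⟩ := hM.hp
  obtain ⟨hq0, hq1⟩ := hM.hq
  haveI hmixP : IsProbabilityMeasure (mixLaw p μ0 μ1) := mixLaw_prob hp0.le hp1.le
  haveI hbernP : IsProbabilityMeasure (bern q) := bern_prob hq0.le hq1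
  set Λ : Measure ((ℕ × ℕ × ℕ) × ℕ × ℕ) := (mixLaw p μ0 μ1).prod ((bern q).prod ν) with hΛ
  haveI : IsProbabilityMeasure ((bern q).prod ν) := by infer_instance
  haveI : IsProbabilityMeasure Λ := by rw [hΛ]; infer_instance
  set f1 : ((ℕ × ℕ × ℕ) × ℕ × ℕ) → ℝ := fun x => if 1 ≤ x.1.2.2 ∧ x.2.1 = 1 then 1 else 0
    with hf1
  have hint1 : Integrable f1 Λ := by
    apply Integrable.mono' (integrable_const (1:ℝ))
      (measurable_of_countable f1).aestronglyMeasurable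
    filter_upwards with x
    rw [hf1]
    simp only
    split_ifs <;> simp
  have hA : (∫ x, f1 x ∂Λ)
      = (Λ {x : (ℕ × ℕ × ℕ) × ℕ × ℕ | 1 ≤ x.1.2.2 ∧ x.2.1 = 1}).toReal := by
    have he : f1 = Set.indicator {x : (ℕ × ℕ × ℕ) × ℕ × ℕ | 1 ≤ x.1.2.2 ∧ x.2.1 = 1}
        (fun _ => (1:ℝ)) := by
      ext x
      rw [Set.indicator_apply]
      rfl
    rw [he, integral_indicator_const (1:ℝ) ((Set.to_countable _).measurableSet),
      smul_eq_mul, mul_one]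
    rfl
  have hApos : 0 < Λ {x : (ℕ × ℕ × ℕ) × ℕ × ℕ | 1 ≤ x.1.2.2 ∧ x.2.1 = 1} := by
    have hset : {x : (ℕ × ℕ × ℕ) × ℕ × ℕ | 1 ≤ x.1.2.2 ∧ x.2.1 = 1}
        = {y : ℕ × ℕ × ℕ | 1 ≤ y.2.2} ×ˢ (({1} : Set ℕ) ×ˢ (Set.univ : Set ℕ)) := by
      ext x
      simp only [Set.mem_setOf_eq, Set.mem_prod, Set.mem_singleton_iff, Set.mem_univ, and_true]
    rw [hΛ, hset, Measure.prod_prod, Measure.prod_prod, bern_one, measure_univ, mul_one]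
    exact ENNReal.mul_pos (ne_of_gt (mixLaw_snd_pos hp0 (hM.pos1 1 1 le_rfl le_rfl)))
      (by simp [ENNReal.ofReal_pos, hq0, ne_of_gt])
  have hβpos : 0 < ∫ x, f1 x ∂Λ := by
    rw [hA]
    exact ENNReal.toReal_pos (ne_of_gt hApos) (measure_ne_top _ _)
  set f2 : ((ℕ × ℕ × ℕ) × ℕ × ℕ) → ℝ := fun x => ((x.1.2.2 : ℕ) : ℝ) with hf2
  have hint2 : Integrable f2 Λ := by
    have h1 : Integrable (fun y : ℕ × ℕ × ℕ => ((y.2.2 : ℕ) : ℝ)) (mixLaw p μ0 μ1) :=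
      integrable_eta_mixLaw hp0 hp1 hM.mom0 hM.mom1
    have hmap : Measure.map Prod.fst Λ = mixLaw p μ0 μ1 := by
      rw [hΛ, Measure.map_fst_prod]
      simp
    rw [← hmap] at h1
    exact (integrable_map_measure (measurable_of_countable _).aestronglyMeasurable
      measurable_fst.aemeasurable).1 h1
  have h1 := slln_aux P (fun k ω => ((I k ω, ξ k ω, η k ω), J k ω, θ k ω)) hM.meas hM.iid Λ
    (fun k => (hM.law k).trans hΛ.symm) f1 hint1
  have h2 := slln_aux P (fun k ω => ((I k ω, ξ k ω, η k ω), J k ω, θ k ω)) hM.meas hM.iid Λ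
    (fun k => (hM.law k).trans hΛ.symm) f2 hint2
  filter_upwards [h1, h2] with ω hω1 hω2
  have hβω : Tendsto (fun n : ℕ => (∑ k ∈ Finset.Icc 1 n,
      if 1 ≤ η k ω ∧ J k ω = 1 then (1:ℝ) else 0) / n) atTop (𝓝 (∫ x, f1 x ∂Λ)) := by
    apply hω1.congr
    intro n
    congr 1
  have hηω : Tendsto (fun n : ℕ => ((η n ω : ℝ)) / n) atTop (𝓝 0) :=
    cesaro_diff (fun k => ((η k ω : ℕ) : ℝ)) _ (hω2.congr (fun n => by congr 1))
  exact det_main ξ η θ J ω _ hβpos hβω hηω c hcpos hunbdd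


end ABTest
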